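/- Let f : E → ℝ be differentiable, convex, and L-smooth with L > 0, let g : E → ℝ be convex and continuous, let 0 < λ ≤ 1/L, and let x* ∈ E be a global minimizer of F = f + g. Let x : ℕ → E be a sequence such that for every k, x_{k+1} is a global minimizer over y ∈ E of y ↦ (1/(2λ))·‖y - (x_k - λ·∇f(x_k))‖² + g(y). Then for every n ≥ 1, F(x_n) - F(x*) ≤ (1/(2nλ))·‖x_0 - x*‖². -/

import Mathlib

open RealInnerProductSpace

lemma line_hasDerivAt {E : Type*} [NormedAddCommGroup E] [InnerProductSpace ℝ E] [CompleteSpace E]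
    (f : E → ℝ) (f' : E → E) (hdiff : ∀ x, HasGradientAt f (f' x) x)
    (x v : E) (t : ℝ) :
    HasDerivAt (fun s : ℝ => f (x + s • v)) ⟪f' (x + t • v), v⟫ t := by
  have h1 : HasDerivAt (fun s : ℝ => x + s • v) v t := by
    simpa using ((hasDerivAt_id t).smul_const v).const_add x
  have h2 := (hdiff (x + t • v)).hasFDerivAt
  have := h2.comp_hasDerivAt t h1
  exact this

lemma grad_convex_ineq {E : Type*} [NormedAddCommGroup E] [InnerProductSpace ℝ E] [CompleteSpace E]
    (f : E → ℝ) (f' : E → E) (hdiff : ∀ x, HasGradientAt f (f' x) x)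
    (hfconv : ConvexOn ℝ Set.univ f) (x z : E) :
    f x + ⟪f' x, z - x⟫ ≤ f z := by
  have hline := line_hasDerivAt f f' hdiff x (z - x) 0
  simp only [zero_smul, add_zero] at hline
  -- slope tends to derivative
  have hslope := hasDerivAt_iff_tendsto_slope.mp hline
  have hkey : ∀ t ∈ Set.Ioo (0:ℝ) 1, slope (fun s : ℝ => f (x + s • (z - x))) 0 t ≤ f z - f x := by
    intro t ht
    have hconv := hfconv.2 (Set.mem_univ x) (Set.mem_univ z) (by linarith [ht.2] : (0:ℝ) ≤ 1 - t)
      (le_of_lt ht.1) (by ring)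
    have hx : x + t • (z - x) = (1 - t) • x + t • z := by
      simp [smul_sub, sub_smul]; abel
    rw [slope_def_field]
    have : f (x + t • (z - x)) ≤ (1 - t) * f x + t * f z := by rw [hx]; exact hconv
    simp only [zero_smul, add_zero, sub_zero]
    rw [div_le_iff₀ ht.1]
    nlinarith
  have hle : ∀ᶠ t in nhdsWithin (0:ℝ) (Set.Ioi 0),
      slope (fun s : ℝ => f (x + s • (z - x))) 0 t ≤ f z - f x := by
    filter_upwards [Ioo_mem_nhdsGT_of_mem (by norm_num : (0:ℝ) ∈ Set.Ico (0:ℝ) 1)] with t ht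
    exact hkey t ht
  have htend : Filter.Tendsto (slope (fun s : ℝ => f (x + s • (z - x))) 0)
      (nhdsWithin (0:ℝ) (Set.Ioi 0)) (nhds ⟪f' x, z - x⟫) :=
    hslope.mono_left (nhdsWithin_mono _ (by intro t ht; simp at ht ⊢; exact ne_of_gt ht))
  have := le_of_tendsto htend hle
  linarith

lemma descent_lemma {E : Type*} [NormedAddCommGroup E] [InnerProductSpace ℝ E] [CompleteSpace E]
    (f : E → ℝ) (f' : E → E) (L : ℝ) (hL : 0 < L)
    (hdiff : ∀ x, HasGradientAt f (f' x) x)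
    (hsmooth : ∀ x y, ‖f' x - f' y‖ ≤ L * ‖x - y‖) (x y : E) :
    f y ≤ f x + ⟪f' x, y - x⟫ + (L / 2) * ‖y - x‖ ^ 2 := by
  set v := y - x with hv
  set φ : ℝ → ℝ := fun t => f (x + t • v) - t * ⟪f' x, v⟫ - (L / 2) * t ^ 2 * ‖v‖ ^ 2 with hφ
  have hder : ∀ t : ℝ, HasDerivAt φ (⟪f' (x + t • v), v⟫ - ⟪f' x, v⟫ - L * t * ‖v‖ ^ 2) t := by
    intro t
    have h1 := line_hasDerivAt f f' hdiff x v t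
    have h2 : HasDerivAt (fun t : ℝ => t * ⟪f' x, v⟫) ⟪f' x, v⟫ t := by
      simpa using (hasDerivAt_id t).mul_const ⟪f' x, v⟫
    have h3 : HasDerivAt (fun t : ℝ => (L / 2) * t ^ 2 * ‖v‖ ^ 2) (L * t * ‖v‖ ^ 2) t := by
      have := ((hasDerivAt_pow 2 t).const_mul (L / 2)).mul_const (‖v‖ ^ 2)
      convert this using 1
      · rfl
      · rfl
      ring
    exact (h1.sub h2).sub h3
  have hmono : AntitoneOn φ (Set.Icc 0 1) := by
    apply antitoneOn_of_deriv_nonpos (convex_Icc 0 1)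
    · exact Continuous.continuousOn (by
        have : Continuous φ := by
          have : Differentiable ℝ φ := fun t => (hder t).differentiableAt
          exact this.continuous
        exact this)
    · intro t ht
      exact (hder t).differentiableAt.differentiableWithinAt
    · intro t ht
      rw [interior_Icc] at ht
      rw [(hder t).deriv]
      have hcs : ⟪f' (x + t • v) - f' x, v⟫ ≤ ‖f' (x + t • v) - f' x‖ * ‖v‖ :=
        real_inner_le_norm _ _
      have hlip : ‖f' (x + t • v) - f' x‖ ≤ L * (t * ‖v‖) := by
        have := hsmooth (x + t • v) x
        simpa [norm_smul, abs_of_pos ht.1] using this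
      have hinner : ⟪f' (x + t • v), v⟫ - ⟪f' x, v⟫ = ⟪f' (x + t • v) - f' x, v⟫ := by
        rw [inner_sub_left]
      rw [hinner]
      nlinarith [norm_nonneg v, norm_nonneg (f' (x + t • v) - f' x), ht.1]
  have := hmono (Set.left_mem_Icc.mpr zero_le_one) (Set.right_mem_Icc.mpr zero_le_one) zero_le_one
  simp only [hφ, zero_smul, add_zero, one_smul, zero_mul, one_mul] at this
  have hxy : x + v = y := by rw [hv]; abel
  rw [hxy] at this
  nlinarith [this]

lemma prox_subgrad {E : Type*} [NormedAddCommGroup E] [InnerProductSpace ℝ E]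
    (g : E → ℝ) (hgconv : ConvexOn ℝ Set.univ g)
    (lam : ℝ) (hlam : 0 < lam) (u v : E)
    (hminu : ∀ y : E, (1 / (2 * lam)) * ‖u - v‖ ^ 2 + g u ≤ (1 / (2 * lam)) * ‖y - v‖ ^ 2 + g y)
    (z : E) : g u ≤ g z + (1 / lam) * ⟪u - v, z - u⟫ := by
  have hkey : ∀ t : ℝ, t ∈ Set.Ioo (0:ℝ) 1 →
      g u ≤ g z + (1 / lam) * ⟪u - v, z - u⟫ + (t / (2 * lam)) * ‖z - u‖ ^ 2 := by
    intro t ht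
    have hy := hminu (u + t • (z - u))
    have hnorm : ‖u + t • (z - u) - v‖ ^ 2
        = ‖u - v‖ ^ 2 + 2 * (t * ⟪u - v, z - u⟫) + t ^ 2 * ‖z - u‖ ^ 2 := by
      have h1 : u + t • (z - u) - v = (u - v) + t • (z - u) := by abel
      rw [h1, norm_add_sq_real, real_inner_smul_right, norm_smul]
      rw [Real.norm_eq_abs, mul_pow, sq_abs]
    have hg : g (u + t • (z - u)) ≤ (1 - t) * g u + t * g z := by
      have hconv := hgconv.2 (Set.mem_univ u) (Set.mem_univ z)
        (by linarith [ht.2] : (0:ℝ) ≤ 1 - t) (le_of_lt ht.1) (by ring)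
      have hx : u + t • (z - u) = (1 - t) • u + t • z := by
        simp [smul_sub, sub_smul]; abel
      rw [hx]; exact hconv
    rw [hnorm] at hy
    have hlam2 : 0 < 2 * lam := by linarith
    have h2 : t * g u ≤ (1 / (2 * lam)) * (2 * (t * ⟪u - v, z - u⟫) + t ^ 2 * ‖z - u‖ ^ 2)
        + t * g z := by nlinarith [hy, hg]
    have h4 : t * g u ≤ t * (g z + (1 / lam) * ⟪u - v, z - u⟫
        + (t / (2 * lam)) * ‖z - u‖ ^ 2) := by
      calc t * g u ≤ (1 / (2 * lam)) * (2 * (t * ⟪u - v, z - u⟫) + t ^ 2 * ‖z - u‖ ^ 2)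
            + t * g z := h2
        _ = t * (g z + (1 / lam) * ⟪u - v, z - u⟫ + (t / (2 * lam)) * ‖z - u‖ ^ 2) := by
            field_simp; ring
    exact le_of_mul_le_mul_left h4 ht.1
  have hle : ∀ᶠ t in nhdsWithin (0:ℝ) (Set.Ioi 0),
      g u ≤ g z + (1 / lam) * ⟪u - v, z - u⟫ + (t / (2 * lam)) * ‖z - u‖ ^ 2 := by
    filter_upwards [Ioo_mem_nhdsGT_of_mem (by norm_num : (0:ℝ) ∈ Set.Ico (0:ℝ) 1)] with t ht
    exact hkey t ht
  have htend : Filter.Tendsto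
      (fun t : ℝ => g z + (1 / lam) * ⟪u - v, z - u⟫ + (t / (2 * lam)) * ‖z - u‖ ^ 2)
      (nhdsWithin (0:ℝ) (Set.Ioi 0)) (nhds (g z + (1 / lam) * ⟪u - v, z - u⟫)) := by
    have : Filter.Tendsto
        (fun t : ℝ => g z + (1 / lam) * ⟪u - v, z - u⟫ + (t / (2 * lam)) * ‖z - u‖ ^ 2)
        (nhds (0:ℝ)) (nhds (g z + (1 / lam) * ⟪u - v, z - u⟫)) := by
      have hc : Continuous (fun t : ℝ =>
          g z + (1 / lam) * ⟪u - v, z - u⟫ + (t / (2 * lam)) * ‖z - u‖ ^ 2) := by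
        continuity
      have := hc.tendsto 0
      simpa using this
    exact this.mono_left nhdsWithin_le_nhds
  exact ge_of_tendsto htend hle

theorem prox_gd_convergence {E : Type*} [NormedAddCommGroup E]
    [InnerProductSpace ℝ E] [CompleteSpace E]
    (f g : E → ℝ) (f' : E → E) (L : ℝ) (hL : 0 < L)
    (hdiff : ∀ x, HasGradientAt f (f' x) x)
    (hfconv : ConvexOn ℝ Set.univ f)
    (hsmooth : ∀ x y, ‖f' x - f' y‖ ≤ L * ‖x - y‖)
    (hgconv : ConvexOn ℝ Set.univ g) (hgcont : Continuous g)
    (lam : ℝ) (hlam : 0 < lam) (hlamL : lam ≤ 1 / L)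
    (F : E → ℝ) (hF : F = fun y => f y + g y)
    (xstar : E) (hmin : ∀ y, F xstar ≤ F y)
    (x : ℕ → E)
    (hiter : ∀ k, ∀ y : E,
      (1 / (2 * lam)) * ‖x (k + 1) - (x k - lam • f' (x k))‖ ^ 2 + g (x (k + 1)) ≤
        (1 / (2 * lam)) * ‖y - (x k - lam • f' (x k))‖ ^ 2 + g y) :
    ∀ n : ℕ, 1 ≤ n →
      F (x n) - F xstar ≤ (1 / (2 * n * lam)) * ‖x 0 - xstar‖ ^ 2 := by
  have hLlam : L ≤ 1 / lam := by
    rw [le_div_iff₀ hlam]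
    rw [le_div_iff₀ hL] at hlamL
    linarith [hlamL]
  -- one-step inequality
  have onestep : ∀ k (z : E), F (x (k + 1)) ≤
      F z + (1 / (2 * lam)) * (‖z - x k‖ ^ 2 - ‖z - x (k + 1)‖ ^ 2) := by
    intro k z
    set u := x (k + 1) with hu
    set xk := x k with hxk
    set v := xk - lam • f' xk with hvdef
    have hsub := prox_subgrad g hgconv lam hlam u v (hiter k) z
    have hdesc := descent_lemma f f' L hL hdiff hsmooth xk u
    have hconv := grad_convex_ineq f f' hdiff hfconv xk z
    have hiv : u - v = (u - xk) + lam • f' xk := by rw [hvdef]; abel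
    have e1 : ⟪u - v, z - u⟫ = ⟪u - xk, z - u⟫ + lam * ⟪f' xk, z - u⟫ := by
      rw [hiv, inner_add_left, real_inner_smul_left]
    have e2 : ‖z - xk‖ ^ 2 = ‖z - u‖ ^ 2 + 2 * ⟪z - u, u - xk⟫ + ‖u - xk‖ ^ 2 := by
      have h : z - xk = (z - u) + (u - xk) := by abel
      rw [h, norm_add_sq_real]
    have e3 : ⟪f' xk, u - xk⟫ - ⟪f' xk, z - xk⟫ + ⟪f' xk, z - u⟫ = 0 := by
      rw [← inner_sub_right, ← inner_add_right]
      have h : (u - xk) - (z - xk) + (z - u) = 0 := by abel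
      rw [h, inner_zero_right]
    have e4 : ⟪u - xk, z - u⟫ = ⟪z - u, u - xk⟫ := real_inner_comm _ _
    have hq : (L / 2) * ‖u - xk‖ ^ 2 ≤ (1 / (2 * lam)) * ‖u - xk‖ ^ 2 := by
      have hn : (0:ℝ) ≤ ‖u - xk‖ ^ 2 := sq_nonneg _
      have : L / 2 ≤ 1 / (2 * lam) := by
        have h := (le_div_iff₀ hlam).mp hLlam
        rw [div_le_div_iff₀ (by norm_num) (by linarith)]
        linarith
      nlinarith
    have hlamne : lam ≠ 0 := ne_of_gt hlam
    have e5 : (1 / lam) * (⟪u - xk, z - u⟫ + lam * ⟪f' xk, z - u⟫)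
        = (1 / lam) * ⟪u - xk, z - u⟫ + ⟪f' xk, z - u⟫ := by
      field_simp
    rw [hF]
    simp only
    rw [e1] at hsub
    rw [e5] at hsub
    have e6 : (1 / (2 * lam)) * (‖z - xk‖ ^ 2 - ‖z - u‖ ^ 2)
        = (1 / (2 * lam)) * ‖u - xk‖ ^ 2 + (1 / lam) * ⟪z - u, u - xk⟫ := by
      rw [e2]; field_simp; ring
    rw [e4] at hsub
    linarith [hsub, hdesc, hconv, hq, e3, e6.ge, e6.le]
  -- monotonicity
  have hdec : ∀ k, F (x (k + 1)) ≤ F (x k) := by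
    intro k
    have := onestep k (x k)
    have hn : (0:ℝ) ≤ ‖x k - x (k + 1)‖ ^ 2 := sq_nonneg _
    have h2 : (0:ℝ) < 1 / (2 * lam) := by positivity
    simp only [sub_self, norm_zero] at this
    nlinarith [this]
  have hmono : ∀ i j : ℕ, i ≤ j → F (x j) ≤ F (x i) := by
    intro i j hij
    induction j with
    | zero => simp_all
    | succ m ih =>
      rcases Nat.lt_or_ge i (m + 1) with h | h
      · exact le_trans (hdec m) (ih (Nat.lt_succ_iff.mp h))
      · have : i = m + 1 := le_antisymm hij h
        rw [this]
    -- done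
  intro n hn
  have hnpos : (0:ℝ) < n := by exact_mod_cast hn
  -- telescoping sum
  have hsum : ∑ k ∈ Finset.range n, (F (x (k + 1)) - F xstar)
      ≤ (1 / (2 * lam)) * ‖xstar - x 0‖ ^ 2 := by
    have hterm : ∀ k, F (x (k + 1)) - F xstar ≤
        (1 / (2 * lam)) * (‖xstar - x k‖ ^ 2 - ‖xstar - x (k + 1)‖ ^ 2) := by
      intro k; linarith [onestep k xstar]
    calc ∑ k ∈ Finset.range n, (F (x (k + 1)) - F xstar)
        ≤ ∑ k ∈ Finset.range n,
          (1 / (2 * lam)) * (‖xstar - x k‖ ^ 2 - ‖xstar - x (k + 1)‖ ^ 2) :=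
          Finset.sum_le_sum fun k _ => hterm k
      _ = (1 / (2 * lam)) * (‖xstar - x 0‖ ^ 2 - ‖xstar - x n‖ ^ 2) := by
          rw [← Finset.mul_sum, Finset.sum_range_sub']
      _ ≤ (1 / (2 * lam)) * ‖xstar - x 0‖ ^ 2 := by
          have h2 : (0:ℝ) ≤ 1 / (2 * lam) := by positivity
          nlinarith [sq_nonneg ‖xstar - x n‖]
  have hlb : (n : ℝ) * (F (x n) - F xstar) ≤
      ∑ k ∈ Finset.range n, (F (x (k + 1)) - F xstar) := by
    have : ∀ k ∈ Finset.range n, F (x n) - F xstar ≤ F (x (k + 1)) - F xstar := by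
      intro k hk
      have hkn : k + 1 ≤ n := Finset.mem_range.mp hk
      linarith [hmono (k + 1) n hkn]
    calc (n : ℝ) * (F (x n) - F xstar)
        = ∑ _k ∈ Finset.range n, (F (x n) - F xstar) := by
          rw [Finset.sum_const, Finset.card_range]; ring
      _ ≤ ∑ k ∈ Finset.range n, (F (x (k + 1)) - F xstar) := Finset.sum_le_sum this
  have hnorm : ‖xstar - x 0‖ = ‖x 0 - xstar‖ := norm_sub_rev _ _
  rw [hnorm] at hsum
  have hfinal : (n : ℝ) * (F (x n) - F xstar) ≤ (1 / (2 * lam)) * ‖x 0 - xstar‖ ^ 2 :=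
    le_trans hlb hsum
  have heq : (n:ℝ) * ((1 / (2 * (n:ℝ) * lam)) * ‖x 0 - xstar‖ ^ 2)
      = (1 / (2 * lam)) * ‖x 0 - xstar‖ ^ 2 := by
    have hne : (n:ℝ) ≠ 0 := ne_of_gt hnpos
    field_simp
  have : (n:ℝ) * (F (x n) - F xstar)
      ≤ (n:ℝ) * ((1 / (2 * (n:ℝ) * lam)) * ‖x 0 - xstar‖ ^ 2) := by
    rw [heq]; exact hfinal
  exact le_of_mul_le_mul_left this hnpos
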